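/- Let G be a finite group in which every Sylow subgroup is cyclic, and let q be the largest prime dividing |G|. Then G has a unique (hence normal) q-Sylow subgroup. -/

import Mathlib

open Subgroup

/-- If `P` is a cyclic Sylow `p`-subgroup and `p` is the smallest prime dividing `|G|`,
then `N(P) ≤ C(P)`. -/
lemma aux_norm_le_cent {G : Type*} [Group G] [Finite G] {p : ℕ} [hp : Fact p.Prime]
    (P : Sylow p G) (hcyc : IsCyclic (P : Subgroup G))
    (hmin : ∀ r : ℕ, r.Prime → r ∣ Nat.card G → p ≤ r) :
    Subgroup.normalizer (P : Set G) ≤ Subgroup.centralizer (P : Set G) := by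
  set H : Subgroup G := (P : Subgroup G) with hH
  set f := H.normalizerMonoidHom with hf
  letI := hcyc.commGroup
  haveI hcomm : IsMulCommutative H := ⟨⟨mul_comm⟩⟩
  have hker : f.ker = ⊤ := by
    by_contra hne
    have hidx : f.ker.index ≠ 1 := fun h1 => hne (Subgroup.index_eq_one.mp h1)
    set r := (f.ker.index).minFac with hr
    have hrp : r.Prime := Nat.minFac_prime hidx
    have hrdvd : r ∣ f.ker.index := Nat.minFac_dvd _
    -- the index divides the cardinality of the automorphism group
    have hrange : f.ker.index ∣ Nat.card (MulAut H) := by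
      have h1 : f.ker.index = Nat.card ((normalizer (H : Set G)) ⧸ f.ker) := rfl
      have h2 : Nat.card ((normalizer (H : Set G)) ⧸ f.ker) = Nat.card f.range :=
        Nat.card_congr (QuotientGroup.quotientKerEquivRange f).toEquiv
      rw [h1, h2]
      exact Subgroup.card_subgroup_dvd_card f.range
    have hcardAut : Nat.card (MulAut H) = Nat.totient (Nat.card H) :=
      IsCyclic.card_mulAut H
    obtain ⟨k, hk⟩ := IsPGroup.iff_card.mp P.2
    -- p does not divide the index
    have hple : H.subgroupOf (normalizer (H : Set G)) ≤ f.ker := by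
      rw [hf, Subgroup.normalizerMonoidHom_ker]
      exact Subgroup.comap_mono (Subgroup.le_centralizer H)
    have hpnot : ¬ p ∣ f.ker.index := by
      intro hpd
      have h3 : f.ker.index ∣ (H.subgroupOf (normalizer (H : Set G))).index :=
        Subgroup.index_dvd_of_le hple
      have h4 : ¬ p ∣ ((P.subtype Subgroup.le_normalizer : Sylow p (normalizer (H : Set G))) :
          Subgroup (normalizer (H : Set G))).index := Sylow.not_dvd_index _
      rw [Sylow.coe_subtype] at h4
      exact h4 (hpd.trans h3)
    -- r divides the totient
    have hrt : r ∣ Nat.totient (p ^ k) := by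
      have := hrdvd.trans hrange
      rwa [hcardAut, hk] at this
    have hk0 : k ≠ 0 := by
      rintro rfl
      simp at hrt
      exact hrp.one_lt.ne' hrt
    rw [Nat.totient_prime_pow hp.out (Nat.pos_of_ne_zero hk0)] at hrt
    rcases hrp.dvd_mul.mp hrt with h | h
    · have : r = p := (Nat.prime_dvd_prime_iff_eq hrp hp.out).mp (hrp.dvd_of_dvd_pow h)
      exact hpnot (this ▸ hrdvd)
    · have hp2 := hp.out.two_le
      have hrlt : r < p := by
        have : r ≤ p - 1 := Nat.le_of_dvd (by omega) h
        omega
      have hrG : r ∣ Nat.card G := by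
        have h5 : r ∣ Nat.card (normalizer (H : Set G)) := hrdvd.trans f.ker.index_dvd_card
        exact h5.trans (Subgroup.card_subgroup_dvd_card _)
      exact absurd (hmin r hrp hrG) (by omega)
  -- conclude
  have : (Subgroup.centralizer (H : Set G)).subgroupOf (normalizer (H : Set G)) = ⊤ := by
    rw [← Subgroup.normalizerMonoidHom_ker, ← hf, hker]
  exact Subgroup.subgroupOf_eq_top.mp this

universe u in
lemma aux_exists_normal : ∀ (n : ℕ) (G : Type u) [Group G] [Finite G], Nat.card G = n →
    (∀ p : ℕ, p.Prime → ∀ P : Sylow p G, IsCyclic P) →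
    ∀ q : ℕ, q.Prime → q ∣ Nat.card G → (∀ r : ℕ, r.Prime → r ∣ Nat.card G → r ≤ q) →
    ∃ Q : Sylow q G, (Q : Subgroup G).Normal := by
  intro n
  induction n using Nat.strong_induction_on with
  | _ n ih =>
  intro G _ _ hcard hsyl q hq hdvd hmax
  haveI := Fact.mk hq
  have hcard0 : Nat.card G ≠ 0 := Nat.card_pos.ne'
  have hm1 : Nat.card G ≠ 1 := fun h => hq.one_lt.ne' (Nat.dvd_one.mp (h ▸ hdvd))
  set p := (Nat.card G).minFac with hpdef
  have hp : p.Prime := Nat.minFac_prime hm1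
  have hpdvd : p ∣ Nat.card G := Nat.minFac_dvd _
  have hmin : ∀ r : ℕ, r.Prime → r ∣ Nat.card G → p ≤ r :=
    fun r hr hrd => Nat.minFac_le_of_dvd hr.two_le hrd
  have hpq : p ≤ q := Nat.minFac_le_of_dvd hq.two_le hdvd
  by_cases hpq' : p = q
  · -- G is a q-group
    refine ⟨default, ?_⟩
    set Q : Sylow q G := default with hQ
    have hidx : (Q : Subgroup G).index = 1 := by
      by_contra h
      have hr : ((Q : Subgroup G).index.minFac).Prime := Nat.minFac_prime h
      have hrd : (Q : Subgroup G).index.minFac ∣ (Q : Subgroup G).index := Nat.minFac_dvd _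
      have hrG : (Q : Subgroup G).index.minFac ∣ Nat.card G :=
        hrd.trans (Q : Subgroup G).index_dvd_card
      have h1 : (Q : Subgroup G).index.minFac ≤ q := hmax _ hr hrG
      have h2 : p ≤ (Q : Subgroup G).index.minFac := hmin _ hr hrG
      have : (Q : Subgroup G).index.minFac = q := by omega
      rw [this] at hrd
      exact Q.not_dvd_index hrd
    rw [Subgroup.index_eq_one.mp hidx]
    infer_instance
  · have hplt : p < q := lt_of_le_of_ne hpq hpq'
    haveI := Fact.mk hp
    set P : Sylow p G := default with hPdef
    have hcyc : IsCyclic (P : Subgroup G) := hsyl p hp P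
    have hP : Subgroup.normalizer (P : Set G) ≤ Subgroup.centralizer (P : Set G) :=
      aux_norm_le_cent P hcyc hmin
    haveI : (P : Subgroup G).FiniteIndex := inferInstance
    set N := (MonoidHom.transferSylow P hP).ker with hNdef
    have hcompl : N.IsComplement' (P : Subgroup G) :=
      MonoidHom.ker_transferSylow_isComplement' P hP
    haveI hNnorm : N.Normal := inferInstance
    have hcards : Nat.card N * Nat.card P = Nat.card G := hcompl.card_mul
    have hN0 : Nat.card N ≠ 0 := Nat.card_pos.ne'
    have hcp : Nat.card P = p ^ (Nat.card G).factorization p := P.card_eq_multiplicity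
    have hkpos : 0 < (Nat.card G).factorization p :=
      Nat.Prime.factorization_pos_of_dvd hp hcard0 hpdvd
    have hPgt1 : 1 < Nat.card P := by
      rw [hcp]
      exact Nat.one_lt_pow hkpos.ne' hp.one_lt
    have hqnP : ¬ q ∣ Nat.card P := by
      rw [hcp]
      intro h
      have : q = p := (Nat.prime_dvd_prime_iff_eq hq hp).mp (hq.dvd_of_dvd_pow h)
      omega
    have hqN : q ∣ Nat.card N := by
      have := hdvd
      rw [← hcards] at this
      exact (hq.dvd_mul.mp this).resolve_right hqnP
    have hlt : Nat.card N < n := by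
      rw [← hcard, ← hcards]
      calc Nat.card N = Nat.card N * 1 := (mul_one _).symm
        _ < Nat.card N * Nat.card P := by
            exact (Nat.mul_lt_mul_left Nat.card_pos).mpr hPgt1
    haveI : IsZGroup G := ⟨hsyl⟩
    obtain ⟨Q, hQn⟩ := ih (Nat.card N) hlt N rfl IsZGroup.isZGroup q hq hqN
      (fun r hr hrd => hmax r hr (hrd.trans N.card_subgroup_dvd_card))
    haveI hQn' : (Q : Subgroup N).Normal := hQn
    haveI : (Q : Subgroup N).Characteristic := Sylow.characteristic_of_normal Q hQn
    set Qmap := (Q : Subgroup N).map N.subtype with hQmap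
    haveI hQmapNormal : Qmap.Normal := ConjAct.normal_of_characteristic_of_normal
    have hcQ : Nat.card Qmap = Nat.card Q :=
      (Nat.card_congr (Subgroup.equivMapOfInjective (Q : Subgroup N) N.subtype
        N.subtype_injective).toEquiv).symm
    have hfact : (Nat.card N).factorization q = (Nat.card G).factorization q := by
      rw [← hcards, Nat.factorization_mul hN0 (by positivity), Finsupp.add_apply,
        Nat.factorization_eq_zero_of_not_dvd hqnP, add_zero]
    have hcardQ : Nat.card Qmap = q ^ (Nat.card G).factorization q := by
      rw [hcQ, Q.card_eq_multiplicity, hfact]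
    exact ⟨Sylow.ofCard Qmap hcardQ, by rwa [Sylow.coe_ofCard]⟩

theorem stmt_10 {G : Type*} [Group G] [Fintype G]
    (hsyl : ∀ p : ℕ, p.Prime → ∀ P : Sylow p G, IsCyclic P)
    {q : ℕ} (hq : q.Prime) (hdvd : q ∣ Fintype.card G)
    (hmax : ∀ r : ℕ, r.Prime → r ∣ Fintype.card G → r ≤ q) :
    (∀ P Q : Sylow q G, P = Q) ∧ ∀ P : Sylow q G, (P : Subgroup G).Normal := by
  haveI := Fact.mk hq
  rw [← Nat.card_eq_fintype_card] at hdvd hmax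
  obtain ⟨Q, hQ⟩ := aux_exists_normal (Nat.card G) G rfl hsyl q hq hdvd hmax
  haveI := Sylow.unique_of_normal Q hQ
  refine ⟨fun P P' => Subsingleton.elim P P', fun P => ?_⟩
  rw [Subsingleton.elim P Q]
  exact hQ
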